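/- Let R be a finite commutative ring with identity with |R| = q, let D ⊆ R with |D| = m, let f(x) ∈ R[x], let b ∈ R, and let 0 ≤ k ≤ m. Then, as an identity of complex numbers, k! · N_f(D,k,b) = (1/q)·(m)_k + (1/q)·∑_{ψ ≠ ψ_0} ψ(-b) · ∑_{τ ∈ S_k} sign(τ) · ∏_{i=1}^{k} (∑_{a ∈ D} ψ(i·f(a)))^{c_i(τ)}, where the outer sum is over all nontrivial additive characters ψ of (R,+) (ψ_0 being the trivial character), c_i(τ) is the number of cycles of length i of τ (fixed points counted as 1-cycles), and ψ(i·x) denotes ψ applied to the i-fold sum x + ⋯ + x. -/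

import Mathlib

open Finset

/-- The number of cycles of length `i` of a permutation `τ ∈ S_k`
(fixed points counted as `1`-cycles). -/
def cycleCount {k : ℕ} (τ : Equiv.Perm (Fin k)) (i : ℕ) : ℕ :=
  if i = 1 then (Finset.univ.filter fun x => τ x = x).card
  else Multiset.count i τ.cycleType

/-- `N_f(D, k, b)`: the number of `k`-element subsets `S ⊆ D` with `∑_{x ∈ S} f(x) = b`. -/
def polySubsetSumCount {R : Type*} [CommRing R] [DecidableEq R]
    (D : Finset R) (f : Polynomial R) (k : ℕ) (b : R) : ℕ :=
  ((D.powersetCard k).filter (fun S => ∑ x ∈ S, f.eval x = b)).card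

namespace CharSumAux

open Equiv Equiv.Perm

open scoped Classical

variable {k : ℕ} {α : Type*} [Fintype α]

lemma apply_zpow_eq {τ : Equiv.Perm (Fin k)} {β : Sort*} {g : Fin k → β} (hg : g ∘ τ = g)
    (n : ℤ) : ∀ x, g ((τ ^ n) x) = g x := by
  have h1 : ∀ y, g (τ y) = g y := fun y => congrFun hg y
  induction n using Int.induction_on with
  | zero => intro x; simp
  | succ n ih =>
      intro x
      rw [zpow_add_one, Equiv.Perm.mul_apply, ih (τ x), h1 x]
  | pred n ih =>
      intro x
      rw [zpow_sub_one, Equiv.Perm.mul_apply, ih (τ⁻¹ x), ← h1 (τ⁻¹ x), ← Equiv.Perm.mul_apply, mul_inv_cancel,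
        Equiv.Perm.one_apply]

lemma compat_sameCycle {τ : Equiv.Perm (Fin k)} {β : Sort*} {g : Fin k → β} (hg : g ∘ τ = g)
    {x y : Fin k} (h : τ.SameCycle x y) : g x = g y := by
  obtain ⟨n, rfl⟩ := h
  exact (apply_zpow_eq hg n x).symm

/-- The equivalence class (as a finset) of an element of the quotient by the
`SameCycle` relation. -/
noncomputable def qcls (τ : Equiv.Perm (Fin k)) (q : Quotient (Equiv.Perm.SameCycle.setoid τ)) :
    Finset (Fin k) :=
  univ.filter fun x => Quotient.mk (Equiv.Perm.SameCycle.setoid τ) x = q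

lemma qmk_eq_iff {τ : Equiv.Perm (Fin k)} {x y : Fin k} :
    Quotient.mk (Equiv.Perm.SameCycle.setoid τ) x = Quotient.mk (Equiv.Perm.SameCycle.setoid τ) y
      ↔ τ.SameCycle x y :=
  ⟨fun h => Quotient.exact h, fun h => Quotient.sound h⟩

lemma mem_qcls {τ : Equiv.Perm (Fin k)} {q : Quotient (Equiv.Perm.SameCycle.setoid τ)}
    {x : Fin k} : x ∈ qcls τ q ↔ Quotient.mk (Equiv.Perm.SameCycle.setoid τ) x = q := by
  simp [qcls]

lemma mem_qcls' {τ : Equiv.Perm (Fin k)} {q : Quotient (Equiv.Perm.SameCycle.setoid τ)}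
    {x : Fin k} : x ∈ qcls τ q ↔ τ.SameCycle q.out x := by
  rw [mem_qcls, ← Quotient.out_eq q, qmk_eq_iff, Equiv.Perm.sameCycle_comm]
  rw [Quotient.out_eq]

lemma out_mem_qcls {τ : Equiv.Perm (Fin k)} (q : Quotient (Equiv.Perm.SameCycle.setoid τ)) :
    q.out ∈ qcls τ q := mem_qcls.2 (Quotient.out_eq q)

lemma qmk_apply {τ : Equiv.Perm (Fin k)} (x : Fin k) :
    Quotient.mk (Equiv.Perm.SameCycle.setoid τ) (τ x)
      = Quotient.mk (Equiv.Perm.SameCycle.setoid τ) x :=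
  qmk_eq_iff.2 (Equiv.Perm.sameCycle_apply_left.2 (Equiv.Perm.SameCycle.refl τ x))

lemma qcls_card_pos {τ : Equiv.Perm (Fin k)} (q : Quotient (Equiv.Perm.SameCycle.setoid τ)) :
    1 ≤ (qcls τ q).card :=
  Finset.card_pos.2 ⟨q.out, out_mem_qcls q⟩

lemma qcls_card_le {τ : Equiv.Perm (Fin k)} (q : Quotient (Equiv.Perm.SameCycle.setoid τ)) :
    (qcls τ q).card ≤ k := by
  exact le_trans (Finset.card_le_card (Finset.filter_subset _ _)) (by simp)

lemma qcls_of_fixed {τ : Equiv.Perm (Fin k)} {q : Quotient (Equiv.Perm.SameCycle.setoid τ)}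
    (h : τ q.out = q.out) : qcls τ q = {q.out} := by
  ext y
  rw [mem_qcls', Finset.mem_singleton]
  constructor
  · intro hy; exact (hy.symm.eq_of_right h)
  · rintro rfl; exact Equiv.Perm.SameCycle.refl τ _

lemma fixed_of_qcls_card_one {τ : Equiv.Perm (Fin k)}
    {q : Quotient (Equiv.Perm.SameCycle.setoid τ)} (h : (qcls τ q).card = 1) :
    τ q.out = q.out := by
  have h1 : τ q.out ∈ qcls τ q := mem_qcls.2 ((qmk_apply q.out).trans (Quotient.out_eq q))
  exact Finset.card_le_one.1 h.le _ h1 _ (out_mem_qcls q)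

lemma qcls_eq_support_cycleOf {τ : Equiv.Perm (Fin k)}
    {q : Quotient (Equiv.Perm.SameCycle.setoid τ)} (h : q.out ∈ τ.support) :
    qcls τ q = (τ.cycleOf q.out).support := by
  ext y
  rw [mem_qcls', Equiv.Perm.mem_support_cycleOf_iff]
  exact ⟨fun hy => ⟨hy, h⟩, fun hy => hy.1⟩

/-- Number of `SameCycle`-classes of cardinality `i` equals `cycleCount τ i`. -/
lemma card_qcls_eq_cycleCount (τ : Equiv.Perm (Fin k)) {i : ℕ} (hi : 1 ≤ i) :
    (univ.filter fun q : Quotient (Equiv.Perm.SameCycle.setoid τ) => (qcls τ q).card = i).card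
      = cycleCount τ i := by
  rcases eq_or_ne i 1 with rfl | hne
  · rw [cycleCount, if_pos rfl]
    symm
    apply Finset.card_bij (fun x _ => Quotient.mk (Equiv.Perm.SameCycle.setoid τ) x)
    · intro x hx
      simp only [mem_filter, mem_univ, true_and] at hx ⊢
      have hfix : τ (Quotient.mk (Equiv.Perm.SameCycle.setoid τ) x).out
          = (Quotient.mk (Equiv.Perm.SameCycle.setoid τ) x).out := by
        have hsc : τ.SameCycle x (Quotient.mk (Equiv.Perm.SameCycle.setoid τ) x).out := by
          rw [← qmk_eq_iff, Quotient.out_eq]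
        have := hsc.apply_eq_self_iff.1 hx
        exact this
      rw [qcls_of_fixed hfix, Finset.card_singleton]
    · intro x hx y hy hxy
      simp only [mem_filter, mem_univ, true_and] at hx hy
      exact ((qmk_eq_iff.1 hxy).eq_of_left hx)
    · intro q hq
      simp only [mem_filter, mem_univ, true_and] at hq
      refine ⟨q.out, ?_, Quotient.out_eq q⟩
      simp only [mem_filter, mem_univ, true_and]
      exact fixed_of_qcls_card_one hq
  · have hi2 : 2 ≤ i := lt_of_le_of_ne hi (Ne.symm hne)
    rw [cycleCount, if_neg hne]
    have hct : Multiset.count i τ.cycleType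
        = (τ.cycleFactorsFinset.filter fun c => i = c.support.card).card := by
      rw [Equiv.Perm.cycleType_def, Multiset.count_map]
      rfl
    rw [hct]
    apply Finset.card_bij (fun q _ => τ.cycleOf q.out)
    · intro q hq
      simp only [mem_filter, mem_univ, true_and] at hq
      have hout : q.out ∈ τ.support := by
        by_contra hout
        rw [Equiv.Perm.notMem_support] at hout
        rw [qcls_of_fixed hout, Finset.card_singleton] at hq
        omega
      rw [mem_filter]
      refine ⟨Equiv.Perm.cycleOf_mem_cycleFactorsFinset_iff.2 hout, ?_⟩
      rw [← qcls_eq_support_cycleOf hout, hq]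
    · intro q hq q' hq' heq
      simp only [mem_filter, mem_univ, true_and] at hq hq'
      have hout : q.out ∈ τ.support := by
        by_contra hout
        rw [Equiv.Perm.notMem_support] at hout
        rw [qcls_of_fixed hout, Finset.card_singleton] at hq; omega
      have hout' : q'.out ∈ τ.support := by
        by_contra hout
        rw [Equiv.Perm.notMem_support] at hout
        rw [qcls_of_fixed hout, Finset.card_singleton] at hq'; omega
      have : q'.out ∈ (τ.cycleOf q.out).support := by
        rw [heq, Equiv.Perm.mem_support_cycleOf_iff]
        exact ⟨Equiv.Perm.SameCycle.refl τ _, hout'⟩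
      rw [Equiv.Perm.mem_support_cycleOf_iff] at this
      have := this.1
      rw [← Quotient.out_eq q, ← Quotient.out_eq q', qmk_eq_iff]
      exact this
    · intro c hc
      rw [mem_filter] at hc
      obtain ⟨hcf, hcc⟩ := hc
      have hcs : c.support.Nonempty := by
        rw [← Finset.card_pos, ← hcc]; omega
      obtain ⟨a, ha⟩ := hcs
      have haS : a ∈ τ.support := Equiv.Perm.mem_cycleFactorsFinset_support_le hcf ha
      refine ⟨Quotient.mk (Equiv.Perm.SameCycle.setoid τ) a, ?_, ?_⟩
      · simp only [mem_filter, mem_univ, true_and]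
        have hsc : τ.SameCycle (Quotient.mk (Equiv.Perm.SameCycle.setoid τ) a).out a := by
          rw [← qmk_eq_iff, Quotient.out_eq]
        have hout : (Quotient.mk (Equiv.Perm.SameCycle.setoid τ) a).out ∈ τ.support := by
          rw [Equiv.Perm.mem_support] at haS ⊢
          intro hfix
          exact haS ((hsc.apply_eq_self_iff).1 hfix)
        rw [qcls_eq_support_cycleOf hout, hsc.cycleOf_eq, ← Equiv.Perm.cycle_is_cycleOf ha hcf,
          hcc]
      · have hsc : τ.SameCycle (Quotient.mk (Equiv.Perm.SameCycle.setoid τ) a).out a := by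
          rw [← qmk_eq_iff, Quotient.out_eq]
        rw [hsc.cycleOf_eq, ← Equiv.Perm.cycle_is_cycleOf ha hcf]

/-- Key step (a): the product over `i` of power sums equals the sum over functions constant on
cycles of `τ`. -/
lemma prod_pow_cycleCount (w : α → ℂ) (τ : Equiv.Perm (Fin k)) :
    (∏ i ∈ Icc 1 k, (∑ a, w a ^ i) ^ cycleCount τ i)
      = ∑ g ∈ univ.filter (fun g : Fin k → α => g ∘ τ = g), ∏ i, w (g i) := by
  have h1 : ∑ g ∈ univ.filter (fun g : Fin k → α => g ∘ τ = g), ∏ i, w (g i)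
      = ∑ h : Quotient (Equiv.Perm.SameCycle.setoid τ) → α,
          ∏ x : Fin k, w (h (Quotient.mk (Equiv.Perm.SameCycle.setoid τ) x)) := by
    apply Finset.sum_nbij' (i := fun g => fun q => g q.out)
      (j := fun h => fun x => h (Quotient.mk (Equiv.Perm.SameCycle.setoid τ) x))
    · intro g hg; exact mem_univ _
    · intro h _
      simp only [mem_filter, mem_univ, true_and]
      funext x
      simp only [Function.comp_apply]
      rw [qmk_apply]
    · intro g hg
      simp only [mem_filter, mem_univ, true_and] at hg
      funext x
      exact compat_sameCycle hg (by rw [← qmk_eq_iff, Quotient.out_eq])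
    · intro h _
      funext q
      exact congrArg h (Quotient.out_eq q)
    · intro g hg
      simp only [mem_filter, mem_univ, true_and] at hg
      apply Finset.prod_congr rfl
      intro x _
      congr 1
      exact compat_sameCycle hg (by rw [← qmk_eq_iff, Quotient.out_eq])
  rw [h1]
  have h2 : ∀ h : Quotient (Equiv.Perm.SameCycle.setoid τ) → α,
      (∏ x : Fin k, w (h (Quotient.mk (Equiv.Perm.SameCycle.setoid τ) x)))
        = ∏ q, w (h q) ^ (qcls τ q).card := by
    intro h
    rw [← Finset.prod_fiberwise (univ : Finset (Fin k))
      (fun x => Quotient.mk (Equiv.Perm.SameCycle.setoid τ) x)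
      (fun x => w (h (Quotient.mk (Equiv.Perm.SameCycle.setoid τ) x)))]
    apply Finset.prod_congr rfl
    intro q _
    rw [show (qcls τ q).card = (univ.filter fun x =>
        Quotient.mk (Equiv.Perm.SameCycle.setoid τ) x = q).card from rfl, ← Finset.prod_const]
    apply Finset.prod_congr rfl
    intro x hx
    rw [mem_filter] at hx
    rw [hx.2]
  simp_rw [h2]
  rw [← Fintype.piFinset_univ, ← Finset.prod_univ_sum (fun _ => (univ : Finset α))
    (fun q a => w a ^ (qcls τ q).card)]
  rw [← Finset.prod_fiberwise_of_maps_to (g := fun q => (qcls τ q).card)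
    (t := Icc 1 k) (fun q _ => Finset.mem_Icc.2 ⟨qcls_card_pos q, qcls_card_le q⟩)
    (fun q => ∑ a, w a ^ (qcls τ q).card)]
  apply Finset.prod_congr rfl
  intro i hi
  rw [← card_qcls_eq_cycleCount τ (Finset.mem_Icc.1 hi).1, ← Finset.prod_const]
  apply Finset.prod_congr rfl
  intro q hq
  rw [mem_filter] at hq
  rw [hq.2]

/-- Key step (b): the signed count of permutations stabilizing `g` detects injectivity. -/
lemma sum_sign_stab (g : Fin k → α) :
    ∑ τ ∈ univ.filter (fun τ : Equiv.Perm (Fin k) => g ∘ τ = g), (Equiv.Perm.sign τ : ℂ)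
      = if Function.Injective g then 1 else 0 := by
  split_ifs with h
  · have hf : univ.filter (fun τ : Equiv.Perm (Fin k) => g ∘ τ = g) = {1} := by
      ext τ
      simp only [mem_filter, mem_univ, true_and, mem_singleton]
      constructor
      · intro hτ
        apply Equiv.ext
        intro x
        rw [Equiv.Perm.one_apply]
        exact h (congrFun hτ x)
      · rintro rfl; rfl
    rw [hf, Finset.sum_singleton]
    simp
  · rw [Function.not_injective_iff] at h
    obtain ⟨i, j, hgij, hij⟩ := h
    have hgs : ∀ y, g (Equiv.swap i j y) = g y := by
      intro y
      rcases eq_or_ne y i with rfl | hyi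
      · rw [Equiv.swap_apply_left]; exact hgij.symm
      rcases eq_or_ne y j with rfl | hyj
      · rw [Equiv.swap_apply_right]; exact hgij
      · rw [Equiv.swap_apply_of_ne_of_ne hyi hyj]
    apply Finset.sum_involution (fun τ _ => Equiv.swap i j * τ)
    · intro τ _
      have hs : ((Equiv.Perm.sign (Equiv.swap i j * τ) : ℤ) : ℂ)
          = -((Equiv.Perm.sign τ : ℤ) : ℂ) := by
        rw [Equiv.Perm.sign_mul, Equiv.Perm.sign_swap hij]
        push_cast
        ring
      rw [hs]; ring
    · intro τ _ _ hswap
      apply hij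
      have h2 : Equiv.swap i j = 1 := mul_right_cancel (b := τ) (by rw [one_mul]; exact hswap)
      have h3 : Equiv.swap i j j = (1 : Equiv.Perm (Fin k)) j := by rw [h2]
      simpa [Equiv.swap_apply_right] using h3
    · intro τ hτ
      simp only [mem_filter, mem_univ, true_and] at hτ ⊢
      funext x
      simp only [Function.comp_apply, Equiv.Perm.mul_apply]
      rw [hgs (τ x)]
      exact congrFun hτ x
    · intro τ _
      rw [← mul_assoc, Equiv.swap_mul_self, one_mul]

/-- The key identity: the sum over injections of products of weights equals the
permutation/power-sum expansion. -/
lemma key_identity (w : α → ℂ) (k : ℕ) :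
    ∑ g : Fin k ↪ α, ∏ i, w (g i)
      = ∑ τ : Equiv.Perm (Fin k), (Equiv.Perm.sign τ : ℂ) *
          ∏ i ∈ Icc 1 k, (∑ a, w a ^ i) ^ cycleCount τ i := by
  rw [eq_comm]
  calc
    ∑ τ : Equiv.Perm (Fin k), (Equiv.Perm.sign τ : ℂ) *
        ∏ i ∈ Icc 1 k, (∑ a, w a ^ i) ^ cycleCount τ i
      = ∑ τ : Equiv.Perm (Fin k), ∑ g ∈ univ.filter (fun g : Fin k → α => g ∘ τ = g),
          (Equiv.Perm.sign τ : ℂ) * ∏ i, w (g i) := by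
        refine Finset.sum_congr rfl fun τ _ => ?_
        rw [prod_pow_cycleCount, Finset.mul_sum]
    _ = ∑ g : Fin k → α, ∑ τ ∈ univ.filter (fun τ : Equiv.Perm (Fin k) => g ∘ τ = g),
          (Equiv.Perm.sign τ : ℂ) * ∏ i, w (g i) := by
        simp_rw [Finset.sum_filter]
        exact Finset.sum_comm
    _ = ∑ g ∈ univ.filter (fun g : Fin k → α => Function.Injective g), ∏ i, w (g i) := by
        rw [Finset.sum_filter]
        refine Finset.sum_congr rfl fun g _ => ?_
        rw [← Finset.sum_mul, sum_sign_stab g]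
        split_ifs with h
        · rw [one_mul]
        · rw [zero_mul]
    _ = ∑ g : Fin k ↪ α, ∏ i, w (g i) := by
        apply Finset.sum_bij (fun (g : Fin k → α) (hg : g ∈ univ.filter
          (fun g : Fin k → α => Function.Injective g)) =>
            (⟨g, (Finset.mem_filter.1 hg).2⟩ : Fin k ↪ α))
        · intro g hg; exact mem_univ _
        · intro g hg g' hg' hsame
          exact congrArg (fun (e : Fin k ↪ α) => (e : Fin k → α)) hsame
        · intro e _
          exact ⟨e, Finset.mem_filter.2 ⟨mem_univ _, e.injective⟩, rfl⟩
        · intro g hg; rfl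

end CharSumAux

lemma addChar_map_sum {R : Type*} [CommRing R] {ι : Type*} (ψ : AddChar R ℂ)
    (s : Finset ι) (g : ι → R) : ψ (∑ i ∈ s, g i) = ∏ i ∈ s, ψ (g i) := by
  classical
  induction s using Finset.induction_on with
  | empty => simp
  | insert _ _ h ih => rw [Finset.sum_insert h, Finset.prod_insert h, AddChar.map_add_eq_mul, ih]

open scoped Classical in
theorem char_sum_formula_polySubsetSum
    (R : Type*) [CommRing R] [Fintype R] [DecidableEq R]
    (D : Finset R) (m : ℕ) (hm : D.card = m)
    (f : Polynomial R) (b : R) (k : ℕ) (hk : k ≤ m) :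
    (Nat.factorial k : ℂ) * (polySubsetSumCount D f k b : ℂ)
      = (1 / (Fintype.card R : ℂ)) * (∏ j ∈ Finset.range k, ((m : ℂ) - j))
        + (1 / (Fintype.card R : ℂ)) *
            ∑ ψ ∈ Finset.univ.filter (fun ψ : AddChar R ℂ => ψ ≠ 1),
              ψ (-b) *
                ∑ τ : Equiv.Perm (Fin k),
                  (Equiv.Perm.sign τ : ℂ) *
                    ∏ i ∈ Finset.Icc 1 k,
                      (∑ a ∈ D, ψ (i • f.eval a)) ^ (cycleCount τ i) := by
  have hq0 : ((Fintype.card R : ℂ)) ≠ 0 := Nat.cast_ne_zero.2 Fintype.card_ne_zero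
  -- Step 1 : `k! N` as a sum over embeddings
  have step1 : (Nat.factorial k : ℂ) * (polySubsetSumCount D f k b : ℂ)
      = ∑ g : Fin k ↪ ↥D, (if (∑ i : Fin k, f.eval ↑(g i)) = b then (1 : ℂ) else 0) := by
    have hmap : ∀ g : Fin k ↪ ↥D, (univ.image fun i => ((g i : R))) ∈ D.powersetCard k := by
      intro g
      rw [Finset.mem_powersetCard]
      constructor
      · intro x hx
        simp only [Finset.mem_image] at hx
        obtain ⟨i, _, rfl⟩ := hx
        exact (g i).2
      · have hinj : Function.Injective (fun i : Fin k => ((g i : R))) :=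
          fun a b hab => g.injective (Subtype.val_injective hab)
        rw [Finset.card_image_of_injective _ hinj, card_univ, Fintype.card_fin]
    rw [eq_comm, ← Finset.sum_fiberwise_of_maps_to (fun g _ => hmap g)]
    unfold polySubsetSumCount
    rw [Finset.card_filter]
    push_cast
    rw [Finset.mul_sum]
    refine Finset.sum_congr rfl fun S hS => ?_
    obtain ⟨hSD, hScard⟩ := Finset.mem_powersetCard.1 hS
    have h1 : ∀ g ∈ univ.filter (fun g : Fin k ↪ ↥D =>
        (univ.image fun i => ((g i : R))) = S),
        (if (∑ i : Fin k, f.eval ↑(g i)) = b then (1 : ℂ) else 0)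
          = (if (∑ x ∈ S, f.eval x) = b then (1 : ℂ) else 0) := by
      intro g hg
      have hg' := (Finset.mem_filter.1 hg).2
      have : (∑ i : Fin k, f.eval ↑(g i)) = ∑ x ∈ S, f.eval x := by
        rw [← hg', Finset.sum_image]
        intro x _ y _ h
        exact g.injective (Subtype.val_injective h)
      rw [this]
    rw [Finset.sum_congr rfl h1, Finset.sum_const]
    have hfib : (univ.filter (fun g : Fin k ↪ ↥D =>
        (univ.image fun i => ((g i : R))) = S)).card = Nat.factorial k := by
      have hSk : Fintype.card ↥S = k := by rw [Fintype.card_coe, hScard]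
      have hi1 : ∀ (g : Fin k ↪ ↥D), Function.Injective (fun x : Fin k => ((g x : R))) :=
        fun g a b hab => g.injective (Subtype.val_injective hab)
      have hcard : (univ.filter (fun g : Fin k ↪ ↥D =>
          (univ.image fun i => ((g i : R))) = S)).card
            = (univ : Finset (Fin k ↪ ↥S)).card := by
        refine Finset.card_bij'
          (fun g hg => (⟨fun x => ⟨(g x : R), by
              rw [← (Finset.mem_filter.1 hg).2]
              exact Finset.mem_image_of_mem _ (mem_univ x)⟩, fun a b hab => by
            apply g.injective
            apply Subtype.val_injective
            have h2 := congrArg Subtype.val hab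
            exact h2⟩ : Fin k ↪ ↥S))
          (fun e _ => (⟨fun x => ⟨(e x : R), hSD (e x).2⟩, fun a b hab => by
            apply e.injective
            apply Subtype.val_injective
            have h2 := congrArg Subtype.val hab
            exact h2⟩ : Fin k ↪ ↥D)) ?_ ?_ ?_ ?_
        · intro g hg; exact mem_univ _
        · intro e _
          rw [Finset.mem_filter]
          refine ⟨mem_univ _, ?_⟩
          apply Finset.eq_of_subset_of_card_le
          · intro x hx
            simp only [Finset.mem_image] at hx
            obtain ⟨i, _, rfl⟩ := hx
            exact (e i).2
          · show S.card ≤ (univ.image fun x : Fin k => ((⟨(e x : R), hSD (e x).2⟩ : ↥D) : R)).card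
            have hinj : Function.Injective (fun x : Fin k =>
                ((⟨(e x : R), hSD (e x).2⟩ : ↥D) : R)) := fun a b hab =>
              e.injective (Subtype.val_injective hab)
            rw [hScard, Finset.card_image_of_injective _ hinj, card_univ, Fintype.card_fin]
        · intro g hg
          apply Function.Embedding.ext
          intro x
          apply Subtype.ext
          rfl
        · intro e he
          apply Function.Embedding.ext
          intro x
          apply Subtype.ext
          rfl
      rw [hcard, Finset.card_univ, Fintype.card_embedding_eq, hSk, Fintype.card_fin,
        Nat.descFactorial_self]
    rw [hfib, nsmul_eq_mul]
  rw [step1]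
  -- Step 2 : orthogonality
  have step2 : ∀ x : R, (if x = b then (1 : ℂ) else 0)
      = (1 / (Fintype.card R : ℂ)) * ∑ ψ : AddChar R ℂ, ψ (x - b) := by
    intro x
    rw [AddChar.sum_apply_eq_ite]
    simp only [sub_eq_zero]
    split_ifs with h
    · field_simp
    · rw [mul_zero]
  simp_rw [step2]
  rw [← Finset.mul_sum, Finset.sum_comm]
  -- rewrite each character term
  have step3 : ∀ ψ : AddChar R ℂ,
      (∑ g : Fin k ↪ ↥D, ψ ((∑ i : Fin k, f.eval ↑(g i)) - b))
        = ψ (-b) * ∑ g : Fin k ↪ ↥D, ∏ i : Fin k, ψ (f.eval ↑(g i)) := by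
    intro ψ
    rw [Finset.mul_sum]
    refine Finset.sum_congr rfl fun g _ => ?_
    rw [sub_eq_add_neg, AddChar.map_add_eq_mul, addChar_map_sum, mul_comm]
  simp_rw [step3]
  -- split off the trivial character
  rw [← Finset.add_sum_erase _ _ (mem_univ (1 : AddChar R ℂ))]
  have htriv : ((1 : AddChar R ℂ) (-b)) * ∑ g : Fin k ↪ ↥D,
      ∏ i : Fin k, (1 : AddChar R ℂ) (f.eval ↑(g i)) = ∏ j ∈ Finset.range k, ((m : ℂ) - j) := by
    simp only [AddChar.one_apply, Finset.prod_const_one, Finset.sum_const, card_univ,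
      one_mul, nsmul_eq_mul, mul_one]
    rw [Fintype.card_embedding_eq, Fintype.card_coe, hm, Fintype.card_fin]
    rw [Nat.descFactorial_eq_prod_range]
    push_cast
    apply Finset.prod_congr rfl
    intro j hj
    have hjm : j ≤ m := le_trans (le_of_lt (Finset.mem_range.1 hj)) hk
    rw [Nat.cast_sub hjm]
  have herase : ∀ ψ ∈ univ.erase (1 : AddChar R ℂ),
      ψ (-b) * ∑ g : Fin k ↪ ↥D, ∏ i : Fin k, ψ (f.eval ↑(g i))
        = ψ (-b) * ∑ τ : Equiv.Perm (Fin k), (Equiv.Perm.sign τ : ℂ) *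
            ∏ i ∈ Finset.Icc 1 k, (∑ a ∈ D, ψ (i • f.eval a)) ^ (cycleCount τ i) := by
    intro ψ _
    congr 1
    rw [CharSumAux.key_identity (fun a : ↥D => ψ (f.eval ↑a)) k]
    refine Finset.sum_congr rfl fun τ _ => ?_
    congr 1
    refine Finset.prod_congr rfl fun i _ => ?_
    congr 1
    rw [← Finset.sum_coe_sort D (fun a => ψ (i • f.eval a))]
    refine Finset.sum_congr rfl fun a _ => ?_
    rw [AddChar.map_nsmul_eq_pow]
  rw [htriv, Finset.sum_congr rfl herase, ← Finset.filter_ne' univ (1 : AddChar R ℂ)]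
  rw [mul_add]
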